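/- Let μ ∈ ℂ^{n+1} with all μ_i ∉ ℤ and |μ| = Σμ_i = 0. Let Ω^k(μ) = {ω ∈ t^μℂ[t₀^{±1},...,t_n^{±1}] ⊗_{ℂ[t]} Ω̂^k : L_E(ω) = 0, i_E(ω) = 0} where Ω̂^k is the space of algebraic k-forms on ℂ^{n+1}, E is the Euler vector field, i_E is contraction and L_E the Lie derivative. Then the de Rham differential d maps Ω^k(μ) to Ω^{k+1}(μ), and the resulting complex 0 → Ω^0(μ) → Ω^1(μ) → ... → Ω^n(μ) → 0 is exact. -/

import Mathlib

/-! Twisted Laurent differential forms on `ℂ^m`.  A `k`-form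
`ω ∈ Ω̂^k(μ) = t^μ ℂ[t₀^{±1},…,t_{m-1}^{±1}] ⊗ Ω̂^k` is encoded by its coefficients with
respect to the basis `t^{μ+e} dt_S` (`S ⊆ {0,…,m-1}` with `|S| = k`, `e : Fin m → ℤ`),
i.e. as an element of `W m k := (({S // |S| = k}) × (Fin m → ℤ)) →₀ ℂ`.  The de Rham
differential `d`, the contraction `i_E` with the Euler field `E = ∑ tᵢ∂ᵢ`, and the Lie
derivative `L_E = d ∘ i_E + i_E ∘ d` (Cartan's formula) are given by their usual formulas. -/

def FormIdx (m k : ℕ) : Type := {S : Finset (Fin m) // S.card = k} × (Fin m → ℤ)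

abbrev W (m k : ℕ) : Type := FormIdx m k →₀ ℂ

def delta (m : ℕ) (j : Fin m) : Fin m → ℤ := fun i => if i = j then 1 else 0

/-- The sign `(-1)^{#{i ∈ S | i < j}}`. -/
noncomputable def sgn (m : ℕ) (j : Fin m) (S : Finset (Fin m)) : ℂ :=
  (-1) ^ (S.filter (fun i => i < j)).card

/-- Image of the basis form `t^{μ+e} dt_S` under the de Rham differential:
`d(t^{μ+e} dt_S) = ∑_{j ∉ S} (μ_j + e_j) (-1)^{#{i∈S | i<j}} t^{μ+e-δⱼ} dt_{S∪{j}}`. -/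
noncomputable def dImage (m k : ℕ) (μ : Fin m → ℂ) (p : FormIdx m k) : W m (k + 1) :=
  ∑ j ∈ p.1.1ᶜ.attach, (sgn m j.1 p.1.1 * (μ j.1 + (p.2 j.1 : ℂ))) •
    Finsupp.single
      (⟨⟨insert j.1 p.1.1, by
          rw [Finset.card_insert_of_notMem (Finset.mem_compl.mp j.2), p.1.2]⟩,
        p.2 - delta m j.1⟩) (1 : ℂ)

/-- The de Rham differential on twisted Laurent `k`-forms. -/
noncomputable def dop (m k : ℕ) (μ : Fin m → ℂ) : W m k →ₗ[ℂ] W m (k + 1) :=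
  Finsupp.lsum ℂ fun p => LinearMap.toSpanSingleton ℂ _ (dImage m k μ p)

/-- Image of the basis form `t^{μ+e} dt_S` under contraction with the Euler field:
`i_E(t^{μ+e} dt_S) = ∑_{j ∈ S} (-1)^{#{i∈S | i<j}} t^{μ+e+δⱼ} dt_{S∖{j}}`. -/
noncomputable def cImage (m k : ℕ) (p : FormIdx m (k + 1)) : W m k :=
  ∑ j ∈ p.1.1.attach, sgn m j.1 (p.1.1.erase j.1) •
    Finsupp.single
      (⟨⟨p.1.1.erase j.1, by simp [Finset.card_erase_of_mem j.2, p.1.2]⟩,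
        p.2 + delta m j.1⟩) (1 : ℂ)

/-- Contraction `i_E` with the Euler vector field. -/
noncomputable def iE (m k : ℕ) : W m (k + 1) →ₗ[ℂ] W m k :=
  Finsupp.lsum ℂ fun p => LinearMap.toSpanSingleton ℂ _ (cImage m k p)

/-- The Lie derivative `L_E` along the Euler field, via Cartan's formula
`L_E = d ∘ i_E + i_E ∘ d`. -/
noncomputable def LieE (m : ℕ) (μ : Fin m → ℂ) : (k : ℕ) → W m k →ₗ[ℂ] W m k
  | 0 => iE m 0 ∘ₗ dop m 0 μ
  | (k + 1) => dop m k μ ∘ₗ iE m k + iE m (k + 1) ∘ₗ dop m (k + 1) μ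

/-- Membership in `Ω^k(μ) = {ω : L_E ω = |μ| ω = 0, i_E ω = 0}` (for `|μ| = 0`). -/
def OmegaCond (m : ℕ) (μ : Fin m → ℂ) : (k : ℕ) → W m k → Prop
  | 0, ω => LieE m μ 0 ω = 0
  | (k + 1), ω => LieE m μ (k + 1) ω = 0 ∧ iE m k ω = 0

namespace TDR
open Finset

variable (m : ℕ)

/-- basis element with built-in cardinality test -/
noncomputable def bS (k : ℕ) (S : Finset (Fin m)) (e : Fin m → ℤ) : W m k :=
  if h : S.card = k then Finsupp.single (⟨⟨S, h⟩, e⟩ : FormIdx m k) 1 else 0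

lemma single_eq_bS {k : ℕ} (p : FormIdx m k) :
    Finsupp.single p (1:ℂ) = bS m k p.1.1 p.2 := by
  obtain ⟨⟨S, hS⟩, e⟩ := p
  rw [bS, dif_pos hS]

lemma dop_single {k : ℕ} (μ : Fin m → ℂ) (p : FormIdx m k) :
    dop m k μ (Finsupp.single p 1) = dImage m k μ p := by
  rw [dop, Finsupp.lsum_single]
  simp [LinearMap.toSpanSingleton_apply]

lemma iE_single {k : ℕ} (p : FormIdx m (k+1)) :
    iE m k (Finsupp.single p 1) = cImage m k p := by
  rw [iE, Finsupp.lsum_single]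
  simp [LinearMap.toSpanSingleton_apply]

lemma dop_bS {k : ℕ} (μ : Fin m → ℂ) {S : Finset (Fin m)} (h : S.card = k) (e : Fin m → ℤ) :
    dop m k μ (bS m k S e) =
      ∑ j ∈ Sᶜ, (sgn m j S * (μ j + (e j : ℂ))) • bS m (k+1) (insert j S) (e - delta m j) := by
  rw [bS, dif_pos h]
  refine (dop_single m μ (⟨⟨S, h⟩, e⟩ : FormIdx m k)).trans ?_
  unfold dImage
  rw [← Finset.sum_attach Sᶜ
    (fun j => (sgn m j S * (μ j + (e j : ℂ))) • bS m (k+1) (insert j S) (e - delta m j))]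
  refine Finset.sum_congr rfl fun j _ => ?_
  congr 1
  rw [bS, dif_pos]

lemma iE_bS {k : ℕ} {S : Finset (Fin m)} (h : S.card = k+1) (e : Fin m → ℤ) :
    iE m k (bS m (k+1) S e) =
      ∑ j ∈ S, sgn m j (S.erase j) • bS m k (S.erase j) (e + delta m j) := by
  rw [bS, dif_pos h]
  refine (iE_single m (⟨⟨S, h⟩, e⟩ : FormIdx m (k+1))).trans ?_
  unfold cImage
  rw [← Finset.sum_attach S
    (fun j => sgn m j (S.erase j) • bS m k (S.erase j) (e + delta m j))]
  refine Finset.sum_congr rfl fun j _ => ?_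
  congr 1
  rw [bS, dif_pos]

end TDR

namespace TDR
open Finset

variable (m : ℕ) [NeZero m]

/-- homotopy operator image: `(μ₀+e₀+1)⁻¹ i_{t₀∂₀}` -/
noncomputable def HImage (k : ℕ) (μ : Fin m → ℂ) (p : FormIdx m (k+1)) : W m k :=
  if h : (0 : Fin m) ∈ p.1.1 then
    (μ 0 + (p.2 0 : ℂ) + 1)⁻¹ •
      Finsupp.single (⟨⟨p.1.1.erase 0, by
        rw [Finset.card_erase_of_mem h, p.1.2]; rfl⟩, p.2 + delta m 0⟩ : FormIdx m k) 1
  else 0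

noncomputable def Hop (k : ℕ) (μ : Fin m → ℂ) : W m (k+1) →ₗ[ℂ] W m k :=
  Finsupp.lsum ℂ fun p => LinearMap.toSpanSingleton ℂ _ (HImage m k μ p)

lemma Hop_bS {k : ℕ} (μ : Fin m → ℂ) {S : Finset (Fin m)} (h : S.card = k+1) (e : Fin m → ℤ) :
    Hop m k μ (bS m (k+1) S e) =
      if (0 : Fin m) ∈ S then
        (μ 0 + (e 0 : ℂ) + 1)⁻¹ • bS m k (S.erase 0) (e + delta m 0)
      else 0 := by
  rw [bS, dif_pos h, Hop]
  refine (Finsupp.lsum_single _ _ _ _).trans ?_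
  simp only [LinearMap.toSpanSingleton_apply, one_smul, HImage]
  by_cases h0 : (0 : Fin m) ∈ S
  · rw [dif_pos h0, if_pos h0]
    congr 1
    rw [bS, dif_pos (by simp [Finset.card_erase_of_mem h0, h])]
    rfl
  · rw [dif_neg h0, if_neg h0]

/-- auxiliary "Koszul dual" operator, coefficient-free version of `d`. -/
noncomputable def eImage (k : ℕ) (p : FormIdx m k) : W m (k+1) :=
  ∑ j ∈ p.1.1ᶜ.attach, sgn m j.1 p.1.1 •
    Finsupp.single
      (⟨⟨insert j.1 p.1.1, by
          rw [Finset.card_insert_of_notMem (Finset.mem_compl.mp j.2), p.1.2]⟩,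
        p.2 - delta m j.1⟩) (1 : ℂ)

noncomputable def eop (k : ℕ) : W m k →ₗ[ℂ] W m (k+1) :=
  Finsupp.lsum ℂ fun p => LinearMap.toSpanSingleton ℂ _ (eImage m k p)

lemma eop_bS {k : ℕ} {S : Finset (Fin m)} (h : S.card = k) (e : Fin m → ℤ) :
    eop m k (bS m k S e) =
      ∑ j ∈ Sᶜ, sgn m j S • bS m (k+1) (insert j S) (e - delta m j) := by
  rw [bS, dif_pos h, eop]
  refine (Finsupp.lsum_single _ _ _ _).trans ?_
  simp only [LinearMap.toSpanSingleton_apply, one_smul, eImage]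
  rw [← Finset.sum_attach Sᶜ
    (fun j => sgn m j S • bS m (k+1) (insert j S) (e - delta m j))]
  refine Finset.sum_congr rfl fun j _ => ?_
  congr 1
  rw [bS, dif_pos]

end TDR

namespace TDR
open Finset
set_option linter.unusedSectionVars false

variable (m : ℕ) [NeZero m]

lemma sgn_zero (S : Finset (Fin m)) : sgn m 0 S = 1 := by
  unfold sgn
  rw [Finset.filter_false_of_mem (fun i _ => by simp [Fin.not_lt_zero]), Finset.card_empty, pow_zero]

lemma sgn_sq (j : Fin m) (S : Finset (Fin m)) : sgn m j S * sgn m j S = 1 := by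
  unfold sgn
  rw [← pow_add]
  exact Even.neg_one_pow ⟨_, rfl⟩

lemma sgn_erase_zero {j : Fin m} (hj : j ≠ 0) {S : Finset (Fin m)} (h0 : (0:Fin m) ∈ S) :
    sgn m j (S.erase 0) = - sgn m j S := by
  unfold sgn
  rw [Finset.filter_erase]
  have h0' : (0:Fin m) ∈ S.filter (fun i => i < j) := by
    refine Finset.mem_filter.mpr ⟨h0, ?_⟩
    exact lt_of_le_of_ne (Fin.zero_le _) (Ne.symm hj)
  rw [Finset.card_erase_of_mem h0']
  have hc : 1 ≤ (S.filter (fun i => i < j)).card := Finset.card_pos.mpr ⟨0, h0'⟩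
  have h2 : (-1:ℂ)^((S.filter (fun i => i < j)).card) =
      (-1)^(((S.filter (fun i => i < j)).card - 1) + 1) := by congr 1; omega
  rw [h2, pow_succ]
  ring

lemma sgn_swap {j l : Fin m} (hjl : j ≠ l) {S : Finset (Fin m)} (hj : j ∉ S) (hl : l ∉ S) :
    sgn m l (insert j S) * sgn m j S = -(sgn m j (insert l S) * sgn m l S) := by
  have key : ∀ a b : Fin m, a < b → a ∉ S →
      sgn m b (insert a S) = - sgn m b S ∧ sgn m a (insert b S) = sgn m a S := by
    intro a b hab ha
    constructor
    · unfold sgn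
      rw [Finset.filter_insert, if_pos hab,
        Finset.card_insert_of_notMem (fun hmem => ha (Finset.mem_filter.mp hmem).1), pow_succ]
      ring
    · unfold sgn
      rw [Finset.filter_insert, if_neg (by exact fun hba => absurd hab (not_lt.mpr hba.le))]
  rcases lt_or_gt_of_ne hjl with h | h
  · obtain ⟨h1, h2⟩ := key j l h hj
    rw [h1, h2]; ring
  · obtain ⟨h1, h2⟩ := key l j h hl
    rw [h1, h2]; ring

end TDR

namespace TDR
open Finset
set_option linter.unusedSectionVars false

variable (m : ℕ) [NeZero m]

lemma lhom_ext_bS {k k' : ℕ} {φ ψ : W m k →ₗ[ℂ] W m k'}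
    (h : ∀ (S : Finset (Fin m)) (hS : S.card = k) (e : Fin m → ℤ),
      φ (bS m k S e) = ψ (bS m k S e)) : φ = ψ := by
  apply Finsupp.lhom_ext
  intro p b
  have hb : (Finsupp.single p b : W m k) = b • Finsupp.single p 1 := by
    rw [Finsupp.smul_single, smul_eq_mul, mul_one]
  rw [hb, map_smul, map_smul, single_eq_bS, h p.1.1 p.1.2 p.2]

lemma mu_ne (μ : Fin m → ℂ) (hμ : ∀ i, ∀ z : ℤ, μ i ≠ z) (i : Fin m) (z : ℤ) :
    μ i + (z : ℂ) ≠ 0 := by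
  intro h
  exact hμ i (-z) (by push_cast; linear_combination h)

lemma dH_Hd (μ : Fin m → ℂ) (hμ : ∀ i, ∀ z : ℤ, μ i ≠ z) (k : ℕ) :
    dop m k μ ∘ₗ Hop m k μ + Hop m (k+1) μ ∘ₗ dop m (k+1) μ = LinearMap.id := by
  apply lhom_ext_bS
  intro S hS e
  simp only [LinearMap.add_apply, LinearMap.comp_apply, LinearMap.id_apply]
  by_cases h0 : (0:Fin m) ∈ S
  · -- case 0 ∈ S
    have hS' : (S.erase 0).card = k := by simp [card_erase_of_mem h0, hS]
    have hcne : (μ 0 + (e 0 : ℂ) + 1) ≠ 0 := by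
      have h := mu_ne m μ hμ 0 (e 0 + 1); push_cast at h
      rw [add_assoc]; exact h
    rw [Hop_bS m μ hS e, if_pos h0, map_smul, dop_bS m μ hS',
        dop_bS m μ hS e, map_sum]
    simp only [map_smul]
    rw [Finset.compl_erase, Finset.sum_insert (by simpa using h0), smul_add]
    have hterm0 : (μ 0 + (e 0 : ℂ) + 1)⁻¹ •
        ((sgn m 0 (S.erase 0) * (μ 0 + (((e + delta m 0) 0 : ℤ) : ℂ))) •
          bS m (k+1) (insert 0 (S.erase 0)) ((e + delta m 0) - delta m 0)) = bS m (k+1) S e := by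
      rw [sgn_zero, one_mul, insert_erase h0, add_sub_cancel_right, smul_smul]
      have h2 : (((e + delta m 0) 0 : ℤ) : ℂ) = (e 0 : ℂ) + 1 := by
        simp [delta]
      rw [h2, show μ 0 + ((e 0 : ℂ) + 1) = μ 0 + (e 0 : ℂ) + 1 from (add_assoc _ _ _).symm,
        inv_mul_cancel₀ hcne, one_smul]
    rw [hterm0, smul_sum, add_assoc, ← Finset.sum_add_distrib]
    have hzero : ∀ j ∈ Sᶜ,
        (μ 0 + (e 0 : ℂ) + 1)⁻¹ •
          ((sgn m j (S.erase 0) * (μ j + (((e + delta m 0) j : ℤ) : ℂ))) •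
            bS m (k+1) (insert j (S.erase 0)) ((e + delta m 0) - delta m j)) +
        (sgn m j S * (μ j + (e j : ℂ))) •
          Hop m (k+1) μ (bS m (k+1+1) (insert j S) (e - delta m j)) = 0 := by
      intro j hj
      have hjS : j ∉ S := mem_compl.mp hj
      have hj0 : j ≠ 0 := by rintro rfl; exact hjS h0
      rw [Hop_bS m μ (by rw [card_insert_of_notMem hjS, hS]) _,
        if_pos (mem_insert_of_mem h0)]
      have hd0 : (((e - delta m j) 0 : ℤ) : ℂ) = (e 0 : ℂ) := by
        simp [delta, hj0.symm]
      have hidx : (insert j S).erase 0 = insert j (S.erase 0) :=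
        Finset.erase_insert_of_ne hj0
      have hexp : e - delta m j + delta m 0 = (e + delta m 0) - delta m j := by
        abel
      have hej : (((e + delta m 0) j : ℤ) : ℂ) = (e j : ℂ) := by
        simp [delta, hj0]
      rw [hd0, hidx, hexp, hej, sgn_erase_zero m hj0 h0]
      module
    rw [Finset.sum_eq_zero hzero, add_zero]
  · -- case 0 ∉ S
    rw [Hop_bS m μ hS e, if_neg h0, map_zero, dop_bS m μ hS e, map_sum, zero_add]
    simp only [map_smul]
    rw [Finset.sum_eq_single_of_mem (0 : Fin m) (mem_compl.mpr h0) ?side]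
    case side =>
      intro j hj hj0
      rw [Hop_bS m μ (by rw [card_insert_of_notMem (mem_compl.mp hj), hS]) _,
        if_neg (by simp [h0, hj0.symm]), smul_zero]
    rw [Hop_bS m μ (by rw [card_insert_of_notMem h0, hS]) _,
      if_pos (mem_insert_self _ _)]
    have hd0 : (((e - delta m 0) 0 : ℤ) : ℂ) + 1 = (e 0 : ℂ) := by
      have h1 : (e - delta m 0) 0 = e 0 - 1 := by simp [delta]
      rw [h1]; push_cast; ring
    rw [add_assoc (μ 0), hd0, Finset.erase_insert h0, sub_add_cancel, sgn_zero, one_mul,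
      smul_smul, mul_inv_cancel₀ (mu_ne m μ hμ 0 (e 0)), one_smul]

end TDR

namespace TDR
open Finset
set_option linter.unusedSectionVars false

variable (m : ℕ) [NeZero m]

lemma Hd_zero (μ : Fin m → ℂ) (hμ : ∀ i, ∀ z : ℤ, μ i ≠ z) :
    Hop m 0 μ ∘ₗ dop m 0 μ = LinearMap.id := by
  apply lhom_ext_bS
  intro S hS e
  have h0 : (0:Fin m) ∉ S := by simp [Finset.card_eq_zero.mp hS]
  simp only [LinearMap.comp_apply, LinearMap.id_apply]
  rw [dop_bS m μ hS e, map_sum]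
  simp only [map_smul]
  rw [Finset.sum_eq_single_of_mem (0 : Fin m) (mem_compl.mpr h0) ?side]
  case side =>
    intro j hj hj0
    rw [Hop_bS m μ (by rw [card_insert_of_notMem (mem_compl.mp hj), hS]) _,
      if_neg (by simp [h0, hj0.symm]), smul_zero]
  rw [Hop_bS m μ (by rw [card_insert_of_notMem h0, hS]) _,
    if_pos (mem_insert_self _ _)]
  have hd0 : (((e - delta m 0) 0 : ℤ) : ℂ) + 1 = (e 0 : ℂ) := by
    have h1 : (e - delta m 0) 0 = e 0 - 1 := by simp [delta]
    rw [h1]; push_cast; ring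
  rw [add_assoc (μ 0), hd0, Finset.erase_insert h0, sub_add_cancel, sgn_zero, one_mul,
    smul_smul, mul_inv_cancel₀ (mu_ne m μ hμ 0 (e 0)), one_smul]

lemma iE_H (μ : Fin m → ℂ) (k : ℕ) :
    iE m k ∘ₗ Hop m (k+1) μ + Hop m k μ ∘ₗ iE m (k+1) = 0 := by
  apply lhom_ext_bS
  intro S hS e
  simp only [LinearMap.add_apply, LinearMap.comp_apply, LinearMap.zero_apply]
  by_cases h0 : (0:Fin m) ∈ S
  · have hS' : (S.erase 0).card = k + 1 := by simp [card_erase_of_mem h0, hS]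
    rw [Hop_bS m μ hS e, if_pos h0, map_smul, iE_bS m hS', iE_bS m hS e, map_sum]
    simp only [map_smul]
    rw [← Finset.sum_erase_add S _ h0,
      Hop_bS m μ (by simp [card_erase_of_mem h0, hS]) _,
      if_neg (notMem_erase _ _), smul_zero, add_zero, smul_sum,
      ← Finset.sum_add_distrib]
    apply Finset.sum_eq_zero
    intro j hj
    have hj0 : j ≠ 0 := (mem_erase.mp hj).1
    have hjS : j ∈ S := (mem_erase.mp hj).2
    rw [Hop_bS m μ (by simp [card_erase_of_mem hjS, hS]) _,
      if_pos (mem_erase.mpr ⟨Ne.symm hj0, h0⟩)]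
    have hd0 : (((e + delta m j) 0 : ℤ) : ℂ) = (e 0 : ℂ) := by
      simp [delta, hj0.symm]
    have hidx : (S.erase j).erase 0 = (S.erase 0).erase j := by
      rw [Finset.erase_right_comm]
    have hexp : e + delta m j + delta m 0 = e + delta m 0 + delta m j := by abel
    have hsgn : sgn m j ((S.erase 0).erase j) = - sgn m j (S.erase j) := by
      rw [← hidx]
      exact sgn_erase_zero m hj0 (mem_erase.mpr ⟨Ne.symm hj0, h0⟩)
    rw [hd0, hidx, hexp, hsgn]
    module
  · rw [Hop_bS m μ hS e, if_neg h0, map_zero, iE_bS m hS e, map_sum, zero_add]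
    simp only [map_smul]
    apply Finset.sum_eq_zero
    intro j hj
    rw [Hop_bS m μ (by simp [card_erase_of_mem hj, hS]) _,
      if_neg (fun hc => h0 (mem_of_mem_erase hc)), smul_zero]

lemma dd_zero (μ : Fin m → ℂ) (k : ℕ) :
    dop m (k+1) μ ∘ₗ dop m k μ = 0 := by
  apply lhom_ext_bS
  intro S hS e
  simp only [LinearMap.comp_apply, LinearMap.zero_apply]
  rw [dop_bS m μ hS e, map_sum]
  simp only [map_smul]
  have step : ∀ j ∈ Sᶜ,
      (sgn m j S * (μ j + (e j : ℂ))) •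
        dop m (k+1) μ (bS m (k+1) (insert j S) (e - delta m j)) =
      ∑ l ∈ Sᶜ.erase j,
        (sgn m j S * (μ j + (e j : ℂ))) •
          ((sgn m l (insert j S) * (μ l + (((e - delta m j) l : ℤ) : ℂ))) •
            bS m (k+1+1) (insert l (insert j S)) (e - delta m j - delta m l)) := by
    intro j hj
    rw [dop_bS m μ (by rw [card_insert_of_notMem (mem_compl.mp hj), hS]) _,
      Finset.compl_insert, smul_sum]
  rw [Finset.sum_congr rfl step]
  set F := fun j l => (sgn m j S * (μ j + (e j : ℂ))) •
      ((sgn m l (insert j S) * (μ l + (((e - delta m j) l : ℤ) : ℂ))) •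
        bS m (k+1+1) (insert l (insert j S)) (e - delta m j - delta m l)) with hF
  have hanti : ∀ l ∈ Sᶜ, ∀ j ∈ Sᶜ.erase l, F j l = - F l j := by
    intro l hl j hj
    have hjl : j ≠ l := (mem_erase.mp hj).1
    have hjS : j ∉ S := mem_compl.mp (mem_erase.mp hj).2
    have hlS : l ∉ S := mem_compl.mp hl
    have hcast : ∀ a b : Fin m, a ≠ b → (((e - delta m b) a : ℤ) : ℂ) = (e a : ℂ) := by
      intro a b hab; simp [delta, hab]
    have hidx : insert l (insert j S) = insert j (insert l S) := Finset.insert_comm _ _ _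
    have hexp : e - delta m j - delta m l = e - delta m l - delta m j := by abel
    rw [hF]
    simp only []
    rw [hcast l j (Ne.symm hjl), hcast j l hjl, hidx, hexp, smul_smul, smul_smul, ← neg_smul]
    congr 1
    linear_combination ((μ j + (e j : ℂ)) * (μ l + (e l : ℂ))) * sgn_swap m hjl hjS hlS
  have hsymm : ∑ j ∈ Sᶜ, ∑ l ∈ Sᶜ.erase j, F j l = - ∑ j ∈ Sᶜ, ∑ l ∈ Sᶜ.erase j, F j l := by
    nth_rewrite 1 [Finset.sum_comm' (s := Sᶜ) (t := fun j => Sᶜ.erase j)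
      (s' := fun l => Sᶜ.erase l) (t' := Sᶜ)
      (by intro x y
          simp only [mem_erase, mem_compl]
          tauto)]
    rw [← Finset.sum_neg_distrib]
    refine Finset.sum_congr rfl fun l hl => ?_
    rw [← Finset.sum_neg_distrib]
    exact Finset.sum_congr rfl fun j hj => hanti l hl j hj
  have h2 : (2:ℂ) • ∑ j ∈ Sᶜ, ∑ l ∈ Sᶜ.erase j, F j l = 0 := by
    rw [two_smul]; nth_rewrite 2 [hsymm]; abel
  rcases smul_eq_zero.mp h2 with h | h
  · exact absurd h two_ne_zero
  · exact h

lemma eop_iE_top (M : ℕ) :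
    eop (M+1) M ∘ₗ iE (M+1) M = ((M : ℂ) + 1) • LinearMap.id := by
  apply lhom_ext_bS
  intro S hS e
  have hSu : S = Finset.univ := by
    rw [← Finset.card_eq_iff_eq_univ]; simpa using hS
  subst hSu
  simp only [LinearMap.comp_apply, LinearMap.smul_apply, LinearMap.id_apply]
  rw [iE_bS _ hS e, map_sum]
  simp only [map_smul]
  have step : ∀ j ∈ (Finset.univ : Finset (Fin (M+1))),
      sgn (M+1) j (Finset.univ.erase j) •
        eop (M+1) M (bS (M+1) M (Finset.univ.erase j) (e + delta (M+1) j)) =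
      bS (M+1) (M+1) Finset.univ e := by
    intro j _
    rw [eop_bS _ (by simpa [card_erase_of_mem (mem_univ j)] using congrArg Nat.pred hS) _,
      Finset.compl_erase, Finset.compl_univ, insert_empty_eq, Finset.sum_singleton,
      insert_erase (mem_univ j), add_sub_cancel_right, smul_smul, sgn_sq, one_smul]
  rw [Finset.sum_congr rfl step, Finset.sum_const, Finset.card_univ, Fintype.card_fin,
    ← Nat.cast_smul_eq_nsmul ℂ]
  push_cast
  rfl

end TDR

/-- For `μ ∈ ℂ^{N+2}` with all `μ_i ∉ ℤ` and `|μ| = 0`, the de Rham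
differential maps `Ω^k(μ)` to `Ω^{k+1}(μ)` and the complex
`0 → Ω^0(μ) → Ω^1(μ) → ⋯ → Ω^{N+1}(μ) → 0` is exact (here the ambient space is `ℂ^{N+2}`,
so the top degree is `N+1`). -/
theorem twisted_deRham_exact
    (N : ℕ) (μ : Fin (N + 2) → ℂ)
    (hμ : ∀ i, ∀ z : ℤ, μ i ≠ z) (hsum : ∑ i, μ i = 0) :
    -- d preserves the conditions L_E = 0, i_E = 0
    (∀ (k : ℕ) (ω : W (N + 2) k), OmegaCond (N + 2) μ k ω →
      OmegaCond (N + 2) μ (k + 1) (dop (N + 2) k μ ω)) ∧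
    -- exactness at Ω⁰ : d is injective there
    (∀ ω : W (N + 2) 0, OmegaCond (N + 2) μ 0 ω → dop (N + 2) 0 μ ω = 0 → ω = 0) ∧
    -- exactness at Ω^k for 1 ≤ k ≤ N
    (∀ k : ℕ, k + 1 ≤ N → ∀ ω : W (N + 2) (k + 1), OmegaCond (N + 2) μ (k + 1) ω →
      dop (N + 2) (k + 1) μ ω = 0 →
      ∃ η : W (N + 2) k, OmegaCond (N + 2) μ k η ∧ dop (N + 2) k μ η = ω) ∧
    -- exactness at the top degree Ω^{N+1} : d is surjective onto it
    (∀ ω : W (N + 2) (N + 1), OmegaCond (N + 2) μ (N + 1) ω →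
      ∃ η : W (N + 2) N, OmegaCond (N + 2) μ N η ∧ dop (N + 2) N μ η = ω) := by
  have l1 : ∀ (k : ℕ) (ω : W (N+2) (k+1)),
      dop (N+2) k μ (TDR.Hop (N+2) k μ ω) + TDR.Hop (N+2) (k+1) μ (dop (N+2) (k+1) μ ω) = ω :=
    fun k ω => by simpa using LinearMap.congr_fun (TDR.dH_Hd (N+2) μ hμ k) ω
  have l10 : ∀ ω : W (N+2) 0, TDR.Hop (N+2) 0 μ (dop (N+2) 0 μ ω) = ω :=
    fun ω => by simpa using LinearMap.congr_fun (TDR.Hd_zero (N+2) μ hμ) ω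
  have l2 : ∀ (k : ℕ) (ω : W (N+2) (k+2)),
      iE (N+2) k (TDR.Hop (N+2) (k+1) μ ω) + TDR.Hop (N+2) k μ (iE (N+2) (k+1) ω) = 0 :=
    fun k ω => by simpa using LinearMap.congr_fun (TDR.iE_H (N+2) μ k) ω
  have l3 : ∀ (k : ℕ) (ω : W (N+2) k), dop (N+2) (k+1) μ (dop (N+2) k μ ω) = 0 :=
    fun k ω => by simpa using LinearMap.congr_fun (TDR.dd_zero (N+2) μ k) ω
  have l4 : ∀ ω : W (N+2) (N+2), iE (N+2) (N+1) ω = 0 → ω = 0 := by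
    intro ω h
    have h5 := LinearMap.congr_fun (TDR.eop_iE_top (N+1)) ω
    simp only [LinearMap.comp_apply, LinearMap.smul_apply, LinearMap.id_apply] at h5
    rw [h, map_zero] at h5
    have h6 : ((N + 1 : ℕ) : ℂ) + 1 ≠ 0 := by
      have he : ((N + 1 : ℕ) : ℂ) + 1 = ((N + 2 : ℕ) : ℂ) := by push_cast; ring
      rw [he, Nat.cast_ne_zero]
      omega
    rcases smul_eq_zero.mp h5.symm with h7 | h7
    · exact absurd h7 h6
    · exact h7
  have key : ∀ (k : ℕ) (ω : W (N+2) (k+1)),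
      LieE (N+2) μ (k+1) ω = 0 → iE (N+2) k ω = 0 → dop (N+2) (k+1) μ ω = 0 →
      OmegaCond (N+2) μ k (TDR.Hop (N+2) k μ ω) ∧
        dop (N+2) k μ (TDR.Hop (N+2) k μ ω) = ω := by
    intro k ω hL hi hd
    have hdH : dop (N+2) k μ (TDR.Hop (N+2) k μ ω) = ω := by
      have h := l1 k ω; rw [hd, map_zero, add_zero] at h; exact h
    refine ⟨?_, hdH⟩
    match k, ω, hL, hi, hd, hdH with
    | 0, ω, hL, hi, hd, hdH =>
      show LieE (N+2) μ 0 (TDR.Hop (N+2) 0 μ ω) = 0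
      simp only [LieE, LinearMap.comp_apply]
      rw [hdH]; exact hi
    | (k+1), ω, hL, hi, hd, hdH =>
      have h6 : iE (N+2) k (TDR.Hop (N+2) (k+1) μ ω) = 0 := by
        have h := l2 k ω; rw [hi, map_zero, add_zero] at h; exact h
      refine ⟨?_, h6⟩
      show LieE (N+2) μ (k+1) (TDR.Hop (N+2) (k+1) μ ω) = 0
      simp only [LieE, LinearMap.add_apply, LinearMap.comp_apply]
      rw [hdH, h6, map_zero, zero_add]; exact hi
  refine ⟨?_, ?_, ?_, ?_⟩
  · -- part 1
    intro k ω hω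
    match k, ω, hω with
    | 0, ω, hω =>
      simp only [OmegaCond, LieE, LinearMap.comp_apply, LinearMap.add_apply] at hω ⊢
      exact ⟨by rw [hω, map_zero, l3 0 ω, map_zero, add_zero], hω⟩
    | (k+1), ω, hω =>
      obtain ⟨hL, hi⟩ := hω
      simp only [OmegaCond, LieE, LinearMap.comp_apply, LinearMap.add_apply] at hL ⊢
      rw [hi, map_zero, zero_add] at hL
      exact ⟨by rw [hL, map_zero, l3 (k+1) ω, map_zero, add_zero], hL⟩
  · -- part 2
    intro ω _ hd
    rw [← l10 ω, hd, map_zero]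
  · -- part 3
    intro k _ ω hω hd
    obtain ⟨hL, hi⟩ := hω
    obtain ⟨h1, h2⟩ := key k ω hL hi hd
    exact ⟨_, h1, h2⟩
  · -- part 4
    intro ω hω
    obtain ⟨hL, hi⟩ := hω
    have hd : dop (N+2) (N+1) μ ω = 0 := by
      apply l4
      simp only [LieE, LinearMap.add_apply, LinearMap.comp_apply] at hL
      rw [hi, map_zero, zero_add] at hL
      exact hL
    obtain ⟨h1, h2⟩ := key N ω hL hi hd
    exact ⟨_, h1, h2⟩
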